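/- Let (R, m) be a local ring, M an R-module, and c : R → T an R-module homomorphism to an R-module T. If the base change c ⊗ id_E : E → T ⊗_R E is injective, where E is the injective hull of the residue field R/m, and R is Noetherian complete, then c is pure. -/

import Mathlib

open TensorProduct

universe w

lemma HH.res_smul {R : Type*} [CommRing R] [IsLocalRing R]
    {r : R} (hr : r ∈ IsLocalRing.maximalIdeal R) (z : IsLocalRing.ResidueField R) :
    r • z = 0 := by
  rw [Algebra.smul_def, IsLocalRing.ResidueField.algebraMap_eq,
    (IsLocalRing.residue_eq_zero_iff r).mpr hr, zero_mul]

lemma HH.torsion {R : Type*} [CommRing R] [IsLocalRing R] [IsNoetherianRing R]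
    {E : Type*} [AddCommGroup E] [Module R E]
    (ι : IsLocalRing.ResidueField R →ₗ[R] E)
    (hess : ∀ N : Submodule R E, N ≠ ⊥ → N ⊓ LinearMap.range ι ≠ ⊥)
    (e : E) :
    ∃ n : ℕ, (IsLocalRing.maximalIdeal R) ^ n ≤
      LinearMap.ker (LinearMap.toSpanSingleton R E e) := by
  have key : ∀ r ∈ IsLocalRing.maximalIdeal R, ∃ n : ℕ, r ^ n • e = 0 := by
    intro r hr
    by_contra hcon
    push_neg at hcon
    have mono : Monotone fun n : ℕ => LinearMap.ker (LinearMap.toSpanSingleton R E (r ^ n • e)) := by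
      intro i j hij
      intro s hs
      simp only [LinearMap.mem_ker, LinearMap.toSpanSingleton_apply] at hs ⊢
      obtain ⟨k, rfl⟩ := Nat.exists_eq_add_of_le hij
      have : s • r ^ (i + k) • e = r ^ k • (s • r ^ i • e) := by
        rw [smul_smul, smul_smul, smul_smul, pow_add]; ring_nf
      rw [this, hs, smul_zero]
    obtain ⟨N, hN⟩ := monotone_stabilizes_iff_noetherian.mpr
      (inferInstance : IsNoetherian R R)
      ⟨fun n => LinearMap.ker (LinearMap.toSpanSingleton R E (r ^ n • e)), mono⟩
    have he' : r ^ N • e ≠ 0 := hcon N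
    have hspan : Submodule.span R {r ^ N • e} ≠ ⊥ := by
      simpa [Submodule.span_singleton_eq_bot] using he'
    obtain ⟨y, hy, hyne⟩ := Submodule.ne_bot_iff _ |>.mp (hess _ hspan)
    obtain ⟨hy1, z, hz⟩ := hy
    obtain ⟨s, hs⟩ := Submodule.mem_span_singleton.mp hy1
    -- r • y = 0
    have hry : r • y = 0 := by
      rw [← hz, ← map_smul, HH.res_smul hr, map_zero]
    -- s ∈ ker at N+1
    have hmem : s ∈ LinearMap.ker (LinearMap.toSpanSingleton R E (r ^ (N + 1) • e)) := by
      simp only [LinearMap.mem_ker, LinearMap.toSpanSingleton_apply]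
      have : s • r ^ (N + 1) • e = r • (s • r ^ N • e) := by
        rw [smul_smul, smul_smul, smul_smul, pow_succ]; ring_nf
      rw [this, hs, hry]
    have hNs := hN (N + 1) (Nat.le_succ N)
    simp only [OrderHom.coe_mk] at hNs
    rw [← hNs] at hmem
    simp only [LinearMap.mem_ker, LinearMap.toSpanSingleton_apply] at hmem
    rw [hs] at hmem
    exact hyne hmem
  have hrad : IsLocalRing.maximalIdeal R ≤
      Ideal.radical (LinearMap.ker (LinearMap.toSpanSingleton R E e)) := by
    intro r hr
    obtain ⟨n, hn⟩ := key r hr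
    exact ⟨n, by simpa [LinearMap.mem_ker, LinearMap.toSpanSingleton_apply] using hn⟩
  exact Ideal.exists_pow_le_of_le_radical_of_fg hrad (IsNoetherian.noetherian _)


lemma HH.uniform_torsion {R : Type*} [CommRing R] [IsLocalRing R] [IsNoetherianRing R]
    {E : Type*} [AddCommGroup E] [Module R E]
    (ι : IsLocalRing.ResidueField R →ₗ[R] E)
    (hess : ∀ N : Submodule R E, N ≠ ⊥ → N ⊓ LinearMap.range ι ≠ ⊥)
    (S : Submodule R E) (hS : S.FG) :
    ∃ n : ℕ, S ≤ Submodule.torsionBySet R E ((IsLocalRing.maximalIdeal R ^ n : Ideal R) : Set R) := by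
  refine Submodule.fg_induction (motive := fun S _ => ∃ n : ℕ, S ≤ Submodule.torsionBySet R E ((IsLocalRing.maximalIdeal R ^ n : Ideal R) : Set R)) ?_ ?_ S hS
  · intro x
    obtain ⟨n, hn⟩ := HH.torsion ι hess x
    refine ⟨n, (Submodule.span_singleton_le_iff_mem _ _).mpr ?_⟩
    rw [Submodule.mem_torsionBySet_iff]
    rintro ⟨a, ha⟩
    simpa [LinearMap.toSpanSingleton_apply] using hn ha
  · rintro S1 S2 - - ⟨n1, h1⟩ ⟨n2, h2⟩
    refine ⟨max n1 n2, sup_le ?_ ?_⟩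
    · exact h1.trans (Submodule.torsionBySet_le_torsionBySet_of_subset
        (Ideal.pow_le_pow_right (le_max_left n1 n2)))
    · exact h2.trans (Submodule.torsionBySet_le_torsionBySet_of_subset
        (Ideal.pow_le_pow_right (le_max_right n1 n2)))

-- finitely generated module killed by m is small (given residue field small)
lemma HH.small_base {R : Type u_1} [CommRing R] [IsLocalRing R]
    [Small.{w} (IsLocalRing.ResidueField R)]
    (N : Type u_2) [AddCommGroup N] [Module R N] [Module.Finite R N]
    (h : (IsLocalRing.maximalIdeal R) • (⊤ : Submodule R N) = ⊥) : Small.{w} N := by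
  obtain ⟨n, s, hs⟩ := Module.Finite.exists_fin (R := R) (M := N)
  have hsmul : ∀ r ∈ IsLocalRing.maximalIdeal R, ∀ x : N, r • x = 0 := by
    intro r hr x
    have : r • x ∈ (IsLocalRing.maximalIdeal R) • (⊤ : Submodule R N) :=
      Submodule.smul_mem_smul hr trivial
    rwa [h, Submodule.mem_bot] at this
  set σ : IsLocalRing.ResidueField R → R :=
    Function.surjInv Ideal.Quotient.mk_surjective with hσ
  have hσ' : ∀ z, IsLocalRing.residue R (σ z) = z :=
    fun z => Function.surjInv_eq Ideal.Quotient.mk_surjective z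
  have hsur : Function.Surjective (fun a : Fin n → IsLocalRing.ResidueField R =>
      ∑ i, σ (a i) • s i) := by
    intro x
    have hx : x ∈ Submodule.span R (Set.range s) := hs ▸ Submodule.mem_top
    obtain ⟨c, hc⟩ := (Submodule.mem_span_range_iff_exists_fun R).mp hx
    refine ⟨fun i => IsLocalRing.residue R (c i), ?_⟩
    rw [← hc]
    apply Finset.sum_congr rfl
    intro i _
    have hmem : σ (IsLocalRing.residue R (c i)) - c i ∈ IsLocalRing.maximalIdeal R := by
      rw [← IsLocalRing.residue_eq_zero_iff, map_sub, hσ', sub_self]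
    have := hsmul _ hmem (s i)
    rw [sub_smul, sub_eq_zero] at this
    exact this
  exact small_of_surjective hsur

lemma HH.small_pow {R : Type u_1} [CommRing R] [IsLocalRing R] [IsNoetherianRing R]
    [Small.{w} (IsLocalRing.ResidueField R)] :
    ∀ (K : ℕ) (N : Type u_2) [AddCommGroup N] [Module R N] [Module.Finite R N],
      ((IsLocalRing.maximalIdeal R) ^ K • (⊤ : Submodule R N) = ⊥) → Small.{w} N := by
  intro K
  induction K with
  | zero =>
    intro N _ _ _ h
    rw [pow_zero, Ideal.one_eq_top, Submodule.top_smul] at h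
    have : ∀ x : N, x = 0 := fun x => by
      have : x ∈ (⊥ : Submodule R N) := h ▸ Submodule.mem_top
      simpa using this
    exact small_of_injective (β := PUnit.{w+1}) (f := fun _ => PUnit.unit)
      (fun a b _ => by rw [this a, this b])
  | succ K ih =>
    intro N _ _ _ h
    set P : Submodule R N := (IsLocalRing.maximalIdeal R) • ⊤ with hP
    haveI : IsNoetherian R N := isNoetherian_of_isNoetherianRing_of_finite R N
    haveI : Module.Finite R ↥P := Module.Finite.iff_fg.mpr (IsNoetherian.noetherian P)
    -- quotient small
    haveI hq : Small.{w} (N ⧸ P) := by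
      apply HH.small_base (R := R) (N ⧸ P)
      rw [eq_bot_iff]
      refine Submodule.smul_le.mpr ?_
      rintro r hr x -
      obtain ⟨y, rfl⟩ := P.mkQ_surjective x
      have : r • y ∈ P := Submodule.smul_mem_smul hr Submodule.mem_top
      rw [Submodule.mem_bot, ← map_smul, Submodule.mkQ_apply, Submodule.Quotient.mk_eq_zero]
      exact this
    -- P small
    haveI hp : Small.{w} ↥P := by
      apply ih ↥P
      have hmap : Submodule.map P.subtype ((IsLocalRing.maximalIdeal R) ^ K • (⊤ : Submodule R ↥P)) = ⊥ := by
        rw [Submodule.map_smul'', Submodule.map_subtype_top, hP, ← Submodule.smul_assoc,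
          Ideal.smul_eq_mul, ← pow_succ]
        exact h
      exact Submodule.map_injective_of_injective P.injective_subtype
        (hmap.trans (Submodule.map_bot P.subtype).symm)
    -- combine
    set σ : (N ⧸ P) → N := Function.surjInv P.mkQ_surjective with hσ
    have hσ' : ∀ z, P.mkQ (σ z) = z := fun z => Function.surjInv_eq P.mkQ_surjective z
    have hmem : ∀ x : N, x - σ (P.mkQ x) ∈ P := by
      intro x
      have h0 : P.mkQ (x - σ (P.mkQ x)) = 0 := by rw [map_sub, hσ', sub_self]
      rwa [Submodule.mkQ_apply, Submodule.Quotient.mk_eq_zero] at h0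
    have hinj : Function.Injective (fun x : N =>
        ((P.mkQ x, ⟨x - σ (P.mkQ x), hmem x⟩) : (N ⧸ P) × ↥P)) := by
      intro a b hab
      simp only [Prod.mk.injEq, Subtype.mk.injEq] at hab
      obtain ⟨h1, h2⟩ := hab
      rw [h1] at h2
      exact sub_left_inj.mp h2
    exact small_of_injective hinj

lemma HH.baer {R : Type u_1} [CommRing R] [IsLocalRing R] [IsNoetherianRing R]
    {E : Type w} [AddCommGroup E] [Module R E]
    (hEinj : Module.Injective R E)
    (ι : IsLocalRing.ResidueField R →ₗ[R] E)
    (hι : Function.Injective ι)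
    (hess : ∀ N : Submodule R E, N ≠ ⊥ → N ⊓ LinearMap.range ι ≠ ⊥) :
    Module.Baer R E := by
  haveI : Small.{w} (IsLocalRing.ResidueField R) := small_of_injective hι
  intro J g
  set mI := IsLocalRing.maximalIdeal R with hmI
  -- uniform torsion on the range of g
  haveI : IsNoetherian R ↥J := isNoetherian_submodule' J
  have hrfg : (LinearMap.range g).FG := by
    rw [LinearMap.range_eq_map]
    exact Submodule.FG.map g (IsNoetherian.noetherian ⊤)
  obtain ⟨n1, hn1⟩ := HH.uniform_torsion ι hess _ hrfg
  -- Artin-Rees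
  obtain ⟨k, hk⟩ := Ideal.exists_pow_inf_eq_pow_smul mI (J : Submodule R R)
  set Mb := k + n1 with hMb
  -- m^n1 • ⊤ ≤ ker g  (inside J)
  have h1 : (mI ^ n1 • (⊤ : Submodule R ↥J)) ≤ LinearMap.ker g := by
    refine Submodule.smul_le.mpr ?_
    rintro r hr y -
    rw [LinearMap.mem_ker, map_smul]
    have hy : g y ∈ Submodule.torsionBySet R E ((mI ^ n1 : Ideal R) : Set R) :=
      hn1 (LinearMap.mem_range_self g y)
    exact (Submodule.mem_torsionBySet_iff _ _).mp hy ⟨r, hr⟩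
  -- elements of J lying in m^Mb are killed by g
  have hkill : ∀ (x : R) (hxJ : x ∈ J), x ∈ (mI ^ Mb : Ideal R) → g ⟨x, hxJ⟩ = 0 := by
    intro x hxJ hxm
    have hx1 : x ∈ (mI ^ Mb • ⊤ ⊓ (J : Submodule R R) : Submodule R R) := by
      refine ⟨?_, hxJ⟩
      have : x • (1 : R) ∈ mI ^ Mb • (⊤ : Submodule R R) :=
        Submodule.smul_mem_smul hxm Submodule.mem_top
      simpa using this
    rw [hk Mb (by omega)] at hx1
    have hsub : x ∈ mI ^ (Mb - k) • (J : Submodule R R) := by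
      refine (smul_mono_right (mI ^ (Mb - k)) ?_ :
        mI ^ (Mb - k) • _ ≤ mI ^ (Mb - k) • (J : Submodule R R)) hx1
      exact inf_le_right
    have hMbk : Mb - k = n1 := by omega
    rw [hMbk] at hsub
    have hmap : mI ^ n1 • (J : Submodule R R)
        = Submodule.map J.subtype (mI ^ n1 • (⊤ : Submodule R ↥J)) := by
      rw [Submodule.map_smul'', Submodule.map_subtype_top]
    rw [hmap] at hsub
    obtain ⟨y, hy, hyx⟩ := hsub
    have : y = ⟨x, hxJ⟩ := Subtype.ext hyx
    rw [← this]
    exact h1 hy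
  -- Set up the quotient maps
  set π : R →ₗ[R] R ⧸ (mI ^ Mb : Ideal R) := (mI ^ Mb : Ideal R).mkQ with hπ
  set φ : ↥J →ₗ[R] R ⧸ (mI ^ Mb : Ideal R) := π ∘ₗ J.subtype with hφ
  have hkerφ : LinearMap.ker φ ≤ LinearMap.ker g := by
    rintro ⟨x, hxJ⟩ hx
    simp only [LinearMap.mem_ker, hφ, LinearMap.comp_apply, Submodule.coe_subtype] at hx
    have hxm : x ∈ (mI ^ Mb : Ideal R) := by
      rwa [hπ, Submodule.mkQ_apply, Submodule.Quotient.mk_eq_zero] at hx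
    exact hkill x hxJ hxm
  set ghat := Submodule.liftQ (LinearMap.ker φ) g hkerφ with hghat
  set eq1 := LinearMap.quotKerEquivRange φ with heq1
  set gbar : ↥(LinearMap.range φ) →ₗ[R] E := ghat ∘ₗ (eq1.symm : _ →ₗ[R] _) with hgbar
  -- smallness
  haveI : Module.Finite R (R ⧸ (mI ^ Mb : Ideal R)) := Module.Finite.quotient R _
  haveI : Small.{w} (R ⧸ (mI ^ Mb : Ideal R)) := by
    apply HH.small_pow (R := R) Mb
    rw [eq_bot_iff]
    refine Submodule.smul_le.mpr ?_
    rintro r hr x -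
    obtain ⟨y, rfl⟩ := Submodule.mkQ_surjective _ x
    rw [Submodule.mem_bot, ← map_smul, Submodule.mkQ_apply, Submodule.Quotient.mk_eq_zero]
    exact Ideal.mul_mem_right y _ hr
  -- extend gbar along the inclusion of range φ into R ⧸ mI^Mb using injectivity
  set eX := Shrink.linearEquiv R (↥(LinearMap.range φ))
  set eY := Shrink.linearEquiv R (R ⧸ (mI ^ Mb : Ideal R))
  obtain ⟨h, hh⟩ := hEinj.out
    (eY.symm.toLinearMap ∘ₗ (LinearMap.range φ).subtype ∘ₗ eX.toLinearMap)
    (by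
      refine eY.symm.injective.comp ?_
      exact (LinearMap.range φ).injective_subtype.comp eX.injective)
    (gbar ∘ₗ eX.toLinearMap)
  refine ⟨h ∘ₗ eY.symm.toLinearMap ∘ₗ π, ?_⟩
  intro x hxJ
  have hmemX : π x ∈ LinearMap.range φ := ⟨⟨x, hxJ⟩, rfl⟩
  have step1 : (⟨π x, hmemX⟩ : ↥(LinearMap.range φ))
      = eq1 (Submodule.Quotient.mk ⟨x, hxJ⟩) := by
    ext
    rw [heq1, LinearMap.quotKerEquivRange_apply_mk]
    rfl
  have step2 : h (eY.symm (π x)) = gbar ⟨π x, hmemX⟩ := by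
    have := hh (eX.symm ⟨π x, hmemX⟩)
    simp only [LinearMap.comp_apply, LinearEquiv.coe_coe, LinearEquiv.apply_symm_apply] at this
    exact this
  show h (eY.symm (π x)) = _
  rw [step2, hgbar, LinearMap.comp_apply, step1]
  simp only [LinearEquiv.coe_coe, LinearEquiv.symm_apply_apply]
  rw [hghat, Submodule.liftQ_apply]


/-- Hochster–Huneke purity criterion: let `(R, m)` be a complete Noetherian local ring, `T` an
`R`-module and `c : R → T` an `R`-module homomorphism. Let `E` be an injective hull of the
residue field `R/m` (an injective module containing `R/m` as an essential submodule). If the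
base change `c ⊗ id_E : E ≅ R ⊗ E → T ⊗ E` is injective, then `c` is pure: `c ⊗ id_M` is
injective for every `R`-module `M`. -/
theorem pure_of_injective_on_injectiveHull (R : Type*) [CommRing R] [IsNoetherianRing R]
    [IsLocalRing R] [IsAdicComplete (IsLocalRing.maximalIdeal R) R]
    (T : Type*) [AddCommGroup T] [Module R T] (c : R →ₗ[R] T)
    (E : Type*) [AddCommGroup E] [Module R E]
    (hEinj : Module.Injective R E)
    (ι : IsLocalRing.ResidueField R →ₗ[R] E)
    (hι : Function.Injective ι)
    (hess : ∀ N : Submodule R E, N ≠ ⊥ → N ⊓ LinearMap.range ι ≠ ⊥)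
    (hc : Function.Injective (LinearMap.rTensor E c)) :
    ∀ (M : Type*) [AddCommGroup M] [Module R M],
      Function.Injective (LinearMap.rTensor M c) := by
  intro M _ _
  have B : Module.Baer R E := HH.baer hEinj ι hι hess
  rw [← LinearMap.ker_eq_bot]
  rw [Submodule.eq_bot_iff]
  intro x hx
  rw [LinearMap.mem_ker] at hx
  set m0 := TensorProduct.lid R M x with hm0def
  suffices h0 : m0 = 0 by
    have : x = (TensorProduct.lid R M).symm m0 := (LinearEquiv.symm_apply_apply _ _).symm
    rw [this, h0, map_zero]
  by_contra hm0
  -- every φ : M →ₗ E kills m0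
  have key : ∀ φ : M →ₗ[R] E, φ m0 = 0 := by
    intro φ
    have hcomm : (LinearMap.rTensor E c) ((LinearMap.lTensor R φ) x)
        = (LinearMap.lTensor T φ) ((LinearMap.rTensor M c) x) := by
      rw [← LinearMap.comp_apply, ← LinearMap.comp_apply,
        LinearMap.rTensor_comp_lTensor, LinearMap.lTensor_comp_rTensor]
    rw [hx, map_zero] at hcomm
    have h3 : LinearMap.lTensor R φ x = 0 := by
      apply hc
      rw [hcomm, map_zero]
    have h4 : φ m0 = TensorProduct.lid R E (LinearMap.lTensor R φ x) := by
      have hmaps : (φ ∘ₗ (TensorProduct.lid R M).toLinearMap)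
          = ((TensorProduct.lid R E).toLinearMap ∘ₗ LinearMap.lTensor R φ) := by
        apply TensorProduct.ext'
        intro r m
        simp
      exact LinearMap.congr_fun hmaps x
    rw [h4, h3, map_zero]
  -- construct φ with φ m0 ≠ 0
  set ts := LinearMap.toSpanSingleton R M m0 with hts
  have hK : LinearMap.ker ts ≠ ⊤ := by
    intro h
    apply hm0
    have h1 : (1 : R) ∈ LinearMap.ker ts := h ▸ Submodule.mem_top
    simpa [hts, LinearMap.toSpanSingleton_apply] using h1
  have hKm : LinearMap.ker ts ≤ IsLocalRing.maximalIdeal R := IsLocalRing.le_maximalIdeal hK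
  set h0 : R →ₗ[R] E := ι ∘ₗ Algebra.linearMap R (IsLocalRing.ResidueField R) with hh0
  have hker : LinearMap.ker ts ≤ LinearMap.ker h0 := by
    intro r hr
    rw [LinearMap.mem_ker, hh0, LinearMap.comp_apply, Algebra.linearMap_apply,
      IsLocalRing.ResidueField.algebraMap_eq, (IsLocalRing.residue_eq_zero_iff r).mpr (hKm hr),
      map_zero]
  set hbar := Submodule.liftQ (LinearMap.ker ts) h0 hker with hhbar
  set injM := Submodule.liftQ (LinearMap.ker ts) ts le_rfl with hinjMdef
  have hinjM : Function.Injective injM := by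
    rw [← LinearMap.ker_eq_bot, hinjMdef]
    exact Submodule.ker_liftQ_eq_bot _ _ _ le_rfl
  obtain ⟨φ, hφ⟩ := B.extension_property injM hinjM hbar
  have hval : φ m0 = ι 1 := by
    have e1 : m0 = injM (Submodule.Quotient.mk 1) := by
      rw [hinjMdef, Submodule.liftQ_apply, hts, LinearMap.toSpanSingleton_apply, one_smul]
    rw [e1, ← LinearMap.comp_apply, hφ, hhbar, Submodule.liftQ_apply, hh0,
      LinearMap.comp_apply, Algebra.linearMap_apply, map_one]
  have : ι 1 ≠ 0 := by
    intro h
    have := hι (h.trans (map_zero ι).symm)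
    exact one_ne_zero this
  exact this (hval ▸ key φ)
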